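/- Let 0 < ε < 1, n ≥ 1, α ≥ 1, and suppose π, σ > 0 satisfy α·π < d* < σ/(2(1+ε)), where d* is the maximum subgraph density of an n-node graph G. Define d_k = (1+ε)^{k−1}·π for k ∈ [K] with K ≥ 2 + ⌈log_{1+ε}(σ/π)⌉, and for each k let (Z_1(k),…,Z_L(k)) be an (α, d_k, L)-decomposition with L = 2 + ⌈log_{1+ε} n⌉. Let k' = max{k ∈ [K] : Z_L(k) ≠ ∅}. Then d*/(α(1+ε)) ≤ d_{k'} ≤ 2(1+ε)²·d*. -/

import Mathlib

open Finset
open scoped Classical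

variable {V : Type*} [Fintype V] [DecidableEq V]

/-- Degree of `v` within the node set `S`: number of neighbors of `v` inside `S`. -/
noncomputable def degIn (G : SimpleGraph V) (v : V) (S : Finset V) : ℕ :=
  (S.filter fun u => G.Adj v u).card

/-- The set of edges of `G` with both endpoints in `S`. -/
noncomputable def edgesIn (G : SimpleGraph V) (S : Finset V) : Finset (Sym2 V) :=
  G.edgeFinset.filter fun e => ∀ v ∈ e, v ∈ S

/-- Density of the subgraph induced by `S`: `|E(S)|/|S|`. -/
noncomputable def density (G : SimpleGraph V) (S : Finset V) : ℝ :=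
  (edgesIn G S).card / S.card

/-- An `(α, d, L)`-decomposition of `G`: a chain `V = Z 1 ⊇ Z 2 ⊇ ⋯ ⊇ Z L` such that
every node of `Z i` with degree `> α d` inside `Z i` is included in `Z (i+1)`, and
no node of `Z i` with degree `< d` inside `Z i` belongs to `Z (i+1)`. -/
def IsDecomp (G : SimpleGraph V) (α d : ℝ) (L : ℕ) (Z : ℕ → Finset V) : Prop :=
  Z 1 = Finset.univ ∧
  (∀ i, 1 ≤ i → i < L → Z (i + 1) ⊆ Z i) ∧
  (∀ i, 1 ≤ i → i < L → ∀ v ∈ Z i, α * d < (degIn G v (Z i) : ℝ) → v ∈ Z (i + 1)) ∧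
  (∀ i, 1 ≤ i → i < L → ∀ v ∈ Z i, (degIn G v (Z i) : ℝ) < d → v ∉ Z (i + 1))

lemma degIn_mono (G : SimpleGraph V) (v : V) {S T : Finset V} (h : S ⊆ T) :
    degIn G v S ≤ degIn G v T :=
  Finset.card_le_card (Finset.filter_subset_filter _ h)

lemma sum_degIn_eq (G : SimpleGraph V) (S : Finset V) :
    ∑ v ∈ S, degIn G v S = 2 * (edgesIn G S).card := by
  classical
  have h1 : ∑ v ∈ S, degIn G v S
      = ((S ×ˢ S).filter fun p => G.Adj p.1 p.2).card := by
    rw [Finset.card_eq_sum_card_fiberwise (f := Prod.fst) (t := S)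
      (fun p hp => (Finset.mem_product.1 (Finset.mem_filter.1 hp).1).1)]
    refine Finset.sum_congr rfl fun v hv => ?_
    rw [degIn]
    refine Finset.card_nbij (fun u => (v, u)) ?_ ?_ ?_
    · intro u hu
      simp only [Finset.mem_coe, Finset.mem_filter, Finset.mem_product] at hu ⊢
      exact ⟨⟨⟨hv, hu.1⟩, hu.2⟩, trivial⟩
    · intro a _ b _ h
      simpa using h
    · intro p hp
      simp only [Finset.coe_filter, Set.mem_setOf_eq, Finset.mem_filter,
        Finset.mem_product] at hp
      obtain ⟨⟨⟨hp1, hp2⟩, hadj⟩, hfst⟩ := hp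
      refine ⟨p.2, ?_, ?_⟩
      · simp only [Finset.coe_filter, Set.mem_setOf_eq]
        exact ⟨hp2, hfst ▸ hadj⟩
      · simp [← hfst]
  have h2 : ((S ×ˢ S).filter fun p => G.Adj p.1 p.2).card = 2 * (edgesIn G S).card := by
    rw [Finset.card_eq_sum_card_fiberwise (f := fun p : V × V => Sym2.mk p.1 p.2) (t := edgesIn G S) ?memb]
    case memb =>
      intro p hp
      simp only [Finset.mem_coe, Finset.mem_filter, Finset.mem_product] at hp
      simp only [Finset.mem_coe, edgesIn, Finset.mem_filter, SimpleGraph.mem_edgeFinset]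
      refine ⟨(SimpleGraph.mem_edgeSet G).2 hp.2, ?_⟩
      intro v hv
      rw [Sym2.mem_iff] at hv
      rcases hv with rfl | rfl
      · exact hp.1.1
      · exact hp.1.2
    rw [mul_comm]
    refine Finset.sum_const_nat ?_
    intro e he
    simp only [edgesIn, Finset.mem_filter, SimpleGraph.mem_edgeFinset] at he
    induction e with
    | _ a b =>
      have hadj : G.Adj a b := he.1
      have haS : a ∈ S := he.2 a (by simp)
      have hbS : b ∈ S := he.2 b (by simp)
      have hne : a ≠ b := hadj.ne
      have hset : ((S ×ˢ S).filter fun p => G.Adj p.1 p.2).filter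
          (fun p => Sym2.mk p.1 p.2 = s(a, b)) = {(a, b), (b, a)} := by
        ext p
        obtain ⟨x, y⟩ := p
        simp only [Finset.mem_filter, Finset.mem_product, Finset.mem_insert,
          Finset.mem_singleton, Sym2.eq_iff, Prod.mk.injEq, Prod.swap_prod_mk]
        constructor
        · rintro ⟨_, h | h⟩
          · exact Or.inl h
          · exact Or.inr h
        · rintro (⟨rfl, rfl⟩ | ⟨rfl, rfl⟩)
          · exact ⟨⟨⟨haS, hbS⟩, hadj⟩, Or.inl ⟨rfl, rfl⟩⟩
          · exact ⟨⟨⟨hbS, haS⟩, hadj.symm⟩, Or.inr ⟨rfl, rfl⟩⟩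
      rw [hset]
      rw [Finset.card_insert_of_notMem (by simp [hne, Prod.ext_iff]), Finset.card_singleton]
  rw [h1, h2]

lemma edgesIn_empty (G : SimpleGraph V) : edgesIn G (∅ : Finset V) = ∅ := by
  ext e
  induction e with
  | _ a b =>
    simp only [edgesIn, Finset.mem_filter, Finset.notMem_empty, iff_false, not_and]
    intro _ h
    exact absurd (h a (by simp)) (by simp)

lemma edgesIn_card_le (G : SimpleGraph V) (dstar : ℝ) (hd0 : 0 ≤ dstar)
    (hds : IsGreatest {x : ℝ | ∃ S : Finset V, S.Nonempty ∧ x = density G S} dstar)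
    (S : Finset V) : ((edgesIn G S).card : ℝ) ≤ dstar * S.card := by
  rcases S.eq_empty_or_nonempty with rfl | hS
  · simp [edgesIn_empty]
  · have h := hds.2 ⟨S, hS, rfl⟩
    have hc : (0 : ℝ) < S.card := by exact_mod_cast hS.card_pos
    rw [density, div_le_iff₀ hc] at h
    exact h

lemma card_filter_mem_eq_degIn (G : SimpleGraph V) (S : Finset V) {v : V} (hv : v ∈ S) :
    ((edgesIn G S).filter fun e => v ∈ e).card = degIn G v S := by
  rw [degIn]
  refine (Finset.card_nbij (fun u => s(v, u)) ?_ ?_ ?_).symm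
  · intro u hu
    simp only [Finset.mem_coe, Finset.mem_filter] at hu
    simp only [Finset.mem_coe, Finset.mem_filter, edgesIn, SimpleGraph.mem_edgeFinset,
      SimpleGraph.mem_edgeSet, Sym2.mem_iff]
    refine ⟨⟨hu.2, ?_⟩, by simp⟩
    rintro w (rfl | rfl)
    · exact hv
    · exact hu.1
  · intro a _ b _ h
    simpa using Sym2.congr_right.mp h
  · intro e he
    simp only [Finset.coe_filter, Set.mem_setOf_eq, edgesIn, Finset.mem_filter,
      SimpleGraph.mem_edgeFinset, SimpleGraph.mem_edgeSet] at he
    induction e with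
    | _ a b =>
      obtain ⟨⟨hadj, hmem⟩, hve⟩ := he
      rw [Sym2.mem_iff] at hve
      rcases hve with rfl | rfl
      · exact ⟨b, by simpa [Set.mem_setOf_eq, hmem b (by simp)] using (SimpleGraph.mem_edgeSet G).1 hadj, rfl⟩
      · exact ⟨a, by simpa [Set.mem_setOf_eq, hmem a (by simp)] using ((SimpleGraph.mem_edgeSet G).1 hadj).symm, Sym2.eq_swap⟩

lemma edgesIn_card_le_erase (G : SimpleGraph V) (S : Finset V) {v : V} (hv : v ∈ S) :
    (edgesIn G S).card ≤ (edgesIn G (S.erase v)).card + degIn G v S := by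
  have hsub : edgesIn G S ⊆ edgesIn G (S.erase v) ∪ (edgesIn G S).filter (fun e => v ∈ e) := by
    intro e he
    rw [Finset.mem_union]
    by_cases hve : v ∈ e
    · exact Or.inr (Finset.mem_filter.2 ⟨he, hve⟩)
    · left
      simp only [edgesIn, Finset.mem_filter] at he ⊢
      refine ⟨he.1, fun w hw => Finset.mem_erase.2 ⟨?_, he.2 w hw⟩⟩
      rintro rfl; exact hve hw
  calc (edgesIn G S).card ≤ _ := Finset.card_le_card hsub
    _ ≤ _ + _ := Finset.card_union_le _ _
    _ = _ := by rw [card_filter_mem_eq_degIn G S hv]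

lemma min_deg (G : SimpleGraph V) (dstar : ℝ) (hd0 : 0 < dstar)
    (hds : IsGreatest {x : ℝ | ∃ S : Finset V, S.Nonempty ∧ x = density G S} dstar)
    {S : Finset V} (hS : S.Nonempty) (hdens : density G S = dstar) :
    ∀ v ∈ S, dstar ≤ (degIn G v S : ℝ) := by
  intro v hv
  have hc : (0 : ℝ) < S.card := by exact_mod_cast hS.card_pos
  have hA : ((edgesIn G S).card : ℝ) = dstar * S.card := by
    rw [density] at hdens
    field_simp at hdens
    linarith [hdens]
  have hB : ((edgesIn G (S.erase v)).card : ℝ) ≤ dstar * ((S.card : ℝ) - 1) := by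
    have := edgesIn_card_le G dstar hd0.le hds (S.erase v)
    rw [Finset.card_erase_of_mem hv, Nat.cast_sub hS.card_pos] at this
    simpa using this
  have hle := edgesIn_card_le_erase G S hv
  have hle' : ((edgesIn G S).card : ℝ) ≤ (edgesIn G (S.erase v)).card + (degIn G v S : ℝ) := by
    exact_mod_cast hle
  nlinarith [hA, hB, hle']


lemma decomp_nonempty (G : SimpleGraph V) (α d dstar : ℝ)
    (hds : IsGreatest {x : ℝ | ∃ S : Finset V, S.Nonempty ∧ x = density G S} dstar)
    (hd0 : 0 < dstar) (hlt : α * d < dstar)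
    (L : ℕ) (hL1 : 1 ≤ L) (Z : ℕ → Finset V) (hZ : IsDecomp G α d L Z) :
    Z L ≠ ∅ := by
  obtain ⟨S, hSne, hSd⟩ := hds.1
  have hmin := min_deg G dstar hd0 hds hSne hSd.symm
  have key : ∀ i, 1 ≤ i → i ≤ L → S ⊆ Z i := by
    intro i hi
    induction i, hi using Nat.le_induction with
    | base => intro _; rw [hZ.1]; exact fun v _ => Finset.mem_univ v
    | succ i hi ih =>
      intro hiL
      have hsub : S ⊆ Z i := ih (by omega)
      intro v hvS
      refine hZ.2.2.1 i hi (by omega) v (hsub hvS) ?_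
      have h1 : dstar ≤ (degIn G v S : ℝ) := hmin v hvS
      have h2 : (degIn G v S : ℝ) ≤ (degIn G v (Z i) : ℝ) := by
        exact_mod_cast degIn_mono G v hsub
      linarith
  intro hemp
  have := key L hL1 le_rfl
  rw [hemp] at this
  exact hSne.ne_empty (Finset.subset_empty.1 this)

lemma decomp_empty (G : SimpleGraph V) (α ε d dstar : ℝ)
    (hds : IsGreatest {x : ℝ | ∃ S : Finset V, S.Nonempty ∧ x = density G S} dstar)
    (hd0 : 0 < dstar) (hε0 : 0 < ε) (hn : 1 ≤ Fintype.card V)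
    (hgt : 2 * (1 + ε) * dstar < d) (L : ℕ)
    (hL : (L : ℤ) = 2 + ⌈Real.logb (1 + ε) (Fintype.card V)⌉)
    (Z : ℕ → Finset V) (hZ : IsDecomp G α d L Z) : Z L = ∅ := by
  have hb1 : (1 : ℝ) < 1 + ε := by linarith
  have hn0 : (0 : ℝ) < (Fintype.card V : ℝ) := by exact_mod_cast hn
  have hL2 : 2 ≤ L := by
    have : (0 : ℤ) ≤ ⌈Real.logb (1 + ε) (Fintype.card V)⌉ :=
      Int.ceil_nonneg (Real.logb_nonneg hb1 (by exact_mod_cast hn))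
    omega
  -- one-step contraction
  have step : ∀ i, 1 ≤ i → i < L →
      (1 + ε) * ((Z (i+1)).card : ℝ) ≤ ((Z i).card : ℝ) := by
    intro i h1 h2
    have hsub : Z (i+1) ⊆ Z i := hZ.2.1 i h1 h2
    have hdeg : ∀ v ∈ Z (i+1), d ≤ (degIn G v (Z i) : ℝ) := by
      intro v hv
      by_contra hlt
      exact hZ.2.2.2 i h1 h2 v (hsub hv) (not_le.1 hlt) hv
    have hsum1 : d * ((Z (i+1)).card : ℝ) ≤ ∑ v ∈ Z (i+1), (degIn G v (Z i) : ℝ) := by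
      calc d * ((Z (i+1)).card : ℝ) = ∑ _v ∈ Z (i+1), d := by
            rw [Finset.sum_const, nsmul_eq_mul, mul_comm]
        _ ≤ _ := Finset.sum_le_sum hdeg
    have hsum2 : ∑ v ∈ Z (i+1), (degIn G v (Z i) : ℝ) ≤ 2 * dstar * ((Z i).card : ℝ) := by
      have hmono : ∑ v ∈ Z (i+1), degIn G v (Z i) ≤ ∑ v ∈ Z i, degIn G v (Z i) :=
        Finset.sum_le_sum_of_subset hsub
      have hhs := sum_degIn_eq G (Z i)
      have hub := edgesIn_card_le G dstar hd0.le hds (Z i)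
      calc ∑ v ∈ Z (i+1), (degIn G v (Z i) : ℝ)
          = ((∑ v ∈ Z (i+1), degIn G v (Z i) : ℕ) : ℝ) := by push_cast; ring_nf
        _ ≤ ((∑ v ∈ Z i, degIn G v (Z i) : ℕ) : ℝ) := by exact_mod_cast hmono
        _ = 2 * ((edgesIn G (Z i)).card : ℝ) := by rw [hhs]; push_cast; ring
        _ ≤ 2 * (dstar * ((Z i).card : ℝ)) := by linarith
        _ = 2 * dstar * ((Z i).card : ℝ) := by ring
    nlinarith [Nat.cast_nonneg (α := ℝ) (Z (i+1)).card, Nat.cast_nonneg (α := ℝ) (Z i).card]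
  -- iterate
  have iter : ∀ j, j + 1 ≤ L →
      (1 + ε) ^ j * ((Z (j+1)).card : ℝ) ≤ (Fintype.card V : ℝ) := by
    intro j
    induction j with
    | zero =>
      intro _
      simp [hZ.1, Finset.card_univ]
    | succ j ih =>
      intro hjL
      have hih := ih (by omega)
      have hst := step (j+1) (by omega) (by omega)
      have hpow : (0:ℝ) ≤ (1 + ε) ^ j := by positivity
      calc (1 + ε) ^ (j+1) * ((Z (j+2)).card : ℝ)
          = (1 + ε) ^ j * ((1 + ε) * ((Z (j+2)).card : ℝ)) := by ring
        _ ≤ (1 + ε) ^ j * ((Z (j+1)).card : ℝ) := by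
            exact mul_le_mul_of_nonneg_left hst hpow
        _ ≤ _ := hih
  have hfin := iter (L - 1) (by omega)
  rw [show L - 1 + 1 = L by omega] at hfin
  by_contra hne
  have hcard : 1 ≤ ((Z L).card : ℝ) := by
    have : 0 < (Z L).card := Finset.card_pos.2 (Finset.nonempty_of_ne_empty hne)
    exact_mod_cast this
  have hpowL : (Fintype.card V : ℝ) * (1 + ε) ≤ (1 + ε) ^ (L - 1) := by
    have hexp : (1 : ℝ) + Real.logb (1 + ε) (Fintype.card V) ≤ ((L - 1 : ℕ) : ℝ) := by
      have hceil : Real.logb (1 + ε) (Fintype.card V)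
          ≤ (⌈Real.logb (1 + ε) (Fintype.card V)⌉ : ℝ) := Int.le_ceil _
      have hLr : ((L : ℕ) : ℝ) = 2 + (⌈Real.logb (1 + ε) (Fintype.card V)⌉ : ℝ) := by
        exact_mod_cast hL
      have : ((L - 1 : ℕ) : ℝ) = (L : ℝ) - 1 := by
        have : (1:ℕ) ≤ L := by omega
        push_cast [Nat.cast_sub this]; ring
      rw [this, hLr]
      linarith
    have h0 : (0:ℝ) < 1 + ε := by linarith
    calc (Fintype.card V : ℝ) * (1 + ε)
        = (1 + ε) ^ ((1 : ℝ) + Real.logb (1 + ε) (Fintype.card V)) := by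
          rw [Real.rpow_add h0, Real.rpow_one,
            Real.rpow_logb h0 (by linarith) hn0]
          ring
      _ ≤ (1 + ε) ^ (((L - 1 : ℕ) : ℝ)) :=
          Real.rpow_le_rpow_of_exponent_le hb1.le hexp
      _ = (1 + ε) ^ (L - 1 : ℕ) := Real.rpow_natCast _ _
  have : (Fintype.card V : ℝ) * (1 + ε) ≤ (Fintype.card V : ℝ) := by
    calc (Fintype.card V : ℝ) * (1 + ε) ≤ (1 + ε) ^ (L - 1) := hpowL
      _ ≤ (1 + ε) ^ (L - 1) * ((Z L).card : ℝ) := by nlinarith [pow_pos (by linarith : (0:ℝ) < 1 + ε) (L-1)]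
      _ ≤ _ := hfin
  nlinarith

/-- Corollary: the largest `k'` with nonempty topmost level satisfies
`d*/(α(1+ε)) ≤ d_{k'} ≤ 2(1+ε)²·d*`. -/
theorem decomp_search_approximation (G : SimpleGraph V) (α ε p q : ℝ)
    (hα : 1 ≤ α) (hε0 : 0 < ε) (hε1 : ε < 1)
    (hn : 1 ≤ Fintype.card V) (hp : 0 < p) (hq : 0 < q) (dstar : ℝ)
    (hds : IsGreatest {x : ℝ | ∃ S : Finset V, S.Nonempty ∧ x = density G S} dstar)
    (h1 : α * p < dstar) (h2 : dstar < q / (2 * (1 + ε)))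
    (K L : ℕ)
    (hK : (2 + ⌈Real.logb (1 + ε) (q / p)⌉ : ℤ) ≤ (K : ℤ))
    (hL : (L : ℤ) = 2 + ⌈Real.logb (1 + ε) (Fintype.card V)⌉)
    (d : ℕ → ℝ) (hd : ∀ k, 1 ≤ k → k ≤ K → d k = (1 + ε) ^ (k - 1) * p)
    (Z : ℕ → ℕ → Finset V)
    (hZ : ∀ k, 1 ≤ k → k ≤ K → IsDecomp G α (d k) L (Z k))
    (k' : ℕ) (hk'1 : 1 ≤ k') (hk'K : k' ≤ K) (hk'ne : Z k' L ≠ ∅)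
    (hk'max : ∀ k, k' < k → k ≤ K → Z k L = ∅) :
    dstar / (α * (1 + ε)) ≤ d k' ∧ d k' ≤ 2 * (1 + ε) ^ 2 * dstar := by
  have hb1 : (1 : ℝ) < 1 + ε := by linarith
  have hb0 : (0 : ℝ) < 1 + ε := by linarith
  have hd0 : 0 < dstar := lt_trans (by positivity) h1
  have hα0 : (0 : ℝ) < α := by linarith
  have h2' : 2 * (1 + ε) * dstar < q := by
    rw [lt_div_iff₀ (by positivity)] at h2
    linarith [h2]
  have hL1 : 1 ≤ L := by
    have : (0 : ℤ) ≤ ⌈Real.logb (1 + ε) (Fintype.card V)⌉ :=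
      Int.ceil_nonneg (Real.logb_nonneg hb1 (by exact_mod_cast hn))
    omega
  -- d K is large, so Z K L = ∅, hence k' < K
  have hqp1 : (1 : ℝ) < q / p := by
    rw [lt_div_iff₀ hp]
    nlinarith
  have hK1 : (1 : ℕ) ≤ K := by
    have : (0 : ℤ) ≤ ⌈Real.logb (1 + ε) (q / p)⌉ :=
      Int.ceil_nonneg (Real.logb_nonneg hb1 hqp1.le)
    omega
  have hdK : (1 + ε) * q ≤ d K := by
    have hexp : (1 : ℝ) + Real.logb (1 + ε) (q / p) ≤ ((K - 1 : ℕ) : ℝ) := by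
      have hceil : Real.logb (1 + ε) (q / p) ≤ (⌈Real.logb (1 + ε) (q / p)⌉ : ℝ) :=
        Int.le_ceil _
      have hKr : (2 : ℝ) + (⌈Real.logb (1 + ε) (q / p)⌉ : ℝ) ≤ (K : ℝ) := by
        exact_mod_cast hK
      have hc : ((K - 1 : ℕ) : ℝ) = (K : ℝ) - 1 := by
        push_cast [Nat.cast_sub hK1]; ring
      rw [hc]; linarith
    have hpow : (1 + ε) * (q / p) ≤ (1 + ε) ^ (K - 1 : ℕ) := by
      calc (1 + ε) * (q / p)
          = (1 + ε) ^ ((1 : ℝ) + Real.logb (1 + ε) (q / p)) := by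
            rw [Real.rpow_add hb0, Real.rpow_one,
              Real.rpow_logb hb0 (by linarith) (by positivity)]
        _ ≤ (1 + ε) ^ (((K - 1 : ℕ) : ℝ)) :=
            Real.rpow_le_rpow_of_exponent_le hb1.le hexp
        _ = (1 + ε) ^ (K - 1 : ℕ) := Real.rpow_natCast _ _
    rw [hd K hK1 le_rfl]
    calc (1 + ε) * q = ((1 + ε) * (q / p)) * p := by field_simp
      _ ≤ (1 + ε) ^ (K - 1 : ℕ) * p := by
          exact mul_le_mul_of_nonneg_right hpow hp.le
  have hZK : Z K L = ∅ := by
    refine decomp_empty G α ε (d K) dstar hds hd0 hε0 hn ?_ L hL (Z K) (hZ K hK1 le_rfl)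
    nlinarith
  have hk'ltK : k' < K := by
    rcases lt_or_eq_of_le hk'K with h | h
    · exact h
    · exact absurd (h ▸ hZK) hk'ne
  -- upper bound : Z k' L nonempty forces d k' ≤ 2(1+ε) dstar
  have hub : d k' ≤ 2 * (1 + ε) * dstar := by
    by_contra hlt
    exact hk'ne (decomp_empty G α ε (d k') dstar hds hd0 hε0 hn (not_le.1 hlt)
      L hL (Z k') (hZ k' hk'1 hk'K))
  -- lower bound : Z (k'+1) L empty forces dstar ≤ α * d (k'+1)
  have hlb : dstar ≤ α * d (k' + 1) := by
    by_contra hlt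
    exact decomp_nonempty G α (d (k'+1)) dstar hds hd0 (not_le.1 hlt) L hL1
      (Z (k'+1)) (hZ (k'+1) (by omega) (by omega)) (hk'max (k'+1) (by omega) (by omega))
  have hdk1 : d (k' + 1) = (1 + ε) * d k' := by
    rw [hd (k'+1) (by omega) (by omega), hd k' hk'1 hk'K]
    have : k' + 1 - 1 = (k' - 1) + 1 := by omega
    rw [this, pow_succ]
    ring
  constructor
  · rw [div_le_iff₀ (by positivity)]
    rw [hdk1] at hlb
    nlinarith
  · nlinarith [hub, mul_pos hd0 hε0, hb0]
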